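/- Let 0 < α < π. The function h(x) = sin((π−α)x)/sin(πx) is strictly increasing on (0,1/2]: for all 0 < x₁ < x₂ ≤ 1/2, h(x₁) < h(x₂). Moreover h(x) → 1 − α/π as x → 0⁺ and h(1/2) = sin((π−α)/2). -/

import Mathlib

open Filter Topology

private lemma sin_mul_hasDerivAt (c x : ℝ) :
    HasDerivAt (fun x => Real.sin (c * x)) (c * Real.cos (c * x)) x := by
  simpa [mul_comm] using (((hasDerivAt_id x).const_mul c).sin)

private lemma cos_mul_hasDerivAt (c x : ℝ) :
    HasDerivAt (fun x => Real.cos (c * x)) (-(c * Real.sin (c * x))) x := by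
  simpa [mul_comm] using (((hasDerivAt_id x).const_mul c).cos)

/-- For `0 < α < π`, the function `h(x) = sin((π−α)x)/sin(πx)` is strictly
increasing on `(0,1/2]`, tends to `1 − α/π` as `x → 0⁺`, and `h(1/2) = sin((π−α)/2)`. -/
theorem sin_quotient_strictMono (α : ℝ) (hα0 : 0 < α) (hαπ : α < Real.pi) :
    StrictMonoOn (fun x : ℝ => Real.sin ((Real.pi - α) * x) / Real.sin (Real.pi * x))
      (Set.Ioc 0 (1 / 2)) ∧
    Tendsto (fun x : ℝ => Real.sin ((Real.pi - α) * x) / Real.sin (Real.pi * x))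
      (nhdsWithin 0 (Set.Ioi 0)) (nhds (1 - α / Real.pi)) ∧
    Real.sin ((Real.pi - α) * (1 / 2)) / Real.sin (Real.pi * (1 / 2))
      = Real.sin ((Real.pi - α) / 2) := by
  have hπ := Real.pi_pos
  set b := Real.pi - α with hb
  have hbpos : 0 < b := sub_pos.mpr hαπ
  have hbπ : b < Real.pi := by rw [hb]; linarith
  -- auxiliary function g
  set g : ℝ → ℝ := fun x => b * Real.cos (b * x) * Real.sin (Real.pi * x)
      - Real.pi * Real.cos (Real.pi * x) * Real.sin (b * x) with hg
  have hgderiv : ∀ x, HasDerivAt g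
      ((Real.pi ^ 2 - b ^ 2) * (Real.sin (b * x) * Real.sin (Real.pi * x))) x := by
    intro x
    have h1 := ((cos_mul_hasDerivAt b x).const_mul b).mul (sin_mul_hasDerivAt Real.pi x)
    have h2 := ((cos_mul_hasDerivAt Real.pi x).const_mul Real.pi).mul (sin_mul_hasDerivAt b x)
    have := h1.sub h2
    exact this.congr_deriv (by ring)
  have hgcont : Continuous g := by fun_prop
  have hsinπpos : ∀ x ∈ Set.Ioc (0:ℝ) (1/2), 0 < Real.sin (Real.pi * x) := by
    intro x hx
    apply Real.sin_pos_of_pos_of_lt_pi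
    · exact mul_pos hπ hx.1
    · nlinarith [hx.1, hx.2]
  have hsinbpos : ∀ x ∈ Set.Ioc (0:ℝ) (1/2), 0 < Real.sin (b * x) := by
    intro x hx
    apply Real.sin_pos_of_pos_of_lt_pi
    · exact mul_pos hbpos hx.1
    · nlinarith [hx.1, hx.2]
  have hgmono : StrictMonoOn g (Set.Icc 0 (1/2)) := by
    apply strictMonoOn_of_deriv_pos (convex_Icc _ _) hgcont.continuousOn
    intro x hx
    rw [interior_Icc] at hx
    rw [(hgderiv x).deriv]
    have h1 := hsinπpos x ⟨hx.1, hx.2.le⟩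
    have h2 := hsinbpos x ⟨hx.1, hx.2.le⟩
    have h3 : b ^ 2 < Real.pi ^ 2 := by nlinarith
    exact mul_pos (by linarith) (mul_pos h2 h1)
  have hg0 : g 0 = 0 := by simp [hg]
  have hgpos : ∀ x ∈ Set.Ioo (0:ℝ) (1/2), 0 < g x := by
    intro x hx
    have := hgmono (Set.left_mem_Icc.mpr (by norm_num)) ⟨hx.1.le, hx.2.le⟩ hx.1
    linarith [hg0 ▸ this]
  -- derivative of h
  have hhder : ∀ x ∈ Set.Ioo (0:ℝ) (1/2),
      HasDerivAt (fun x : ℝ => Real.sin (b * x) / Real.sin (Real.pi * x))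
        (g x / (Real.sin (Real.pi * x)) ^ 2) x := by
    intro x hx
    have hne : Real.sin (Real.pi * x) ≠ 0 := (hsinπpos x ⟨hx.1, hx.2.le⟩).ne'
    have := (sin_mul_hasDerivAt b x).div (sin_mul_hasDerivAt Real.pi x) hne
    exact this.congr_deriv (by simp only [hg]; ring)
  refine ⟨?_, ?_, ?_⟩
  · apply strictMonoOn_of_deriv_pos (convex_Ioc _ _)
    · apply ContinuousOn.div (by fun_prop) (by fun_prop)
      exact fun x hx => (hsinπpos x hx).ne'
    · intro x hx
      rw [interior_Ioc] at hx
      rw [(hhder x hx).deriv]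
      have h1 := hsinπpos x ⟨hx.1, hx.2.le⟩
      have h2 := hgpos x hx
      positivity
  · -- limit
    have hslope : ∀ c : ℝ, Tendsto (fun x : ℝ => Real.sin (c * x) / x)
        (nhdsWithin 0 (Set.Ioi 0)) (nhds c) := by
      intro c
      have := hasDerivAt_iff_tendsto_slope.mp (sin_mul_hasDerivAt c 0)
      simp only [mul_zero, Real.sin_zero, Real.cos_zero, mul_one] at this
      have h2 : Tendsto (slope (fun x => Real.sin (c * x)) 0)
          (nhdsWithin 0 (Set.Ioi 0)) (nhds c) :=
        this.mono_left (nhdsWithin_mono _ (fun x hx => ne_of_gt hx))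
      refine h2.congr' ?_
      filter_upwards [self_mem_nhdsWithin] with x hx
      simp [slope_def_field, div_eq_div_iff]
    have hmain : Tendsto (fun x : ℝ => Real.sin (b * x) / Real.sin (Real.pi * x))
        (nhdsWithin 0 (Set.Ioi 0)) (nhds (b / Real.pi)) := by
      have := (hslope b).div (hslope Real.pi) hπ.ne'
      refine this.congr' ?_
      filter_upwards [self_mem_nhdsWithin] with x hx
      simp only [Pi.div_apply]
      rw [div_div_div_cancel_right₀ (ne_of_gt hx)]
    have : b / Real.pi = 1 - α / Real.pi := by
      field_simp [hb]
      exact hb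
    rwa [this] at hmain
  · rw [show Real.pi * (1/2) = Real.pi / 2 by ring, Real.sin_pi_div_two, div_one,
      show (Real.pi - α) * (1/2) = (Real.pi - α) / 2 by ring]
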